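/- In misère Nim, a position (finite multiset of pile sizes) is a previous-player win if and only if either (a) all piles have size at most 1 and the number of size-1 piles is odd, or (b) some pile has size at least 2 and the nim-sum of all pile sizes is zero. -/

import Mathlib

instance : Std.Commutative (α := ℕ) (· ^^^ ·) := ⟨Nat.xor_comm⟩
instance : Std.Associative (α := ℕ) (· ^^^ ·) := ⟨Nat.xor_assoc⟩

/-- The nim-sum (bitwise XOR) of a finite multiset of pile sizes. -/
def nimSum (s : Multiset ℕ) : ℕ := Multiset.fold (· ^^^ ·) 0 s

/-- A move in Nim: remove a positive number of counters from a single pile. -/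
def NimMove (s t : Multiset ℕ) : Prop :=
  ∃ a ∈ s, ∃ b < a, t = b ::ₘ s.erase a

mutual
/-- Misère-play previous-player win: the player to move has a move, but every
move leads to a next-player win. -/
inductive MiserePPos : Multiset ℕ → Prop
  | mk (s : Multiset ℕ) : (∃ t, NimMove s t) →
      (∀ t, NimMove s t → MisereNPos t) → MiserePPos s

/-- Misère-play next-player win: either the player to move cannot move (the
opponent made the last move and thus loses), or some move leads to a
previous-player win. -/
inductive MisereNPos : Multiset ℕ → Prop
  | stuck (s : Multiset ℕ) : (∀ t, ¬ NimMove s t) → MisereNPos s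
  | mk (s t : Multiset ℕ) : NimMove s t → MiserePPos t → MisereNPos s
end

/-- The winning condition for the previous player in misère Nim. -/
def Pp (s : Multiset ℕ) : Prop :=
  ((∀ a ∈ s, a ≤ 1) ∧ Odd (s.count 1)) ∨
  ((∃ a ∈ s, 2 ≤ a) ∧ nimSum s = 0)

lemma nimSum_cons (a : ℕ) (s : Multiset ℕ) : nimSum (a ::ₘ s) = a ^^^ nimSum s :=
  Multiset.fold_cons_left _ _ _ _

lemma nimSum_erase {a : ℕ} {s : Multiset ℕ} (h : a ∈ s) :
    nimSum s = a ^^^ nimSum (s.erase a) := by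
  conv_lhs => rw [← Multiset.cons_erase h, nimSum_cons]

lemma exists_testBit_mem {s : Multiset ℕ} {i : ℕ} (h : (nimSum s).testBit i = true) :
    ∃ x ∈ s, x.testBit i = true := by
  induction s using Multiset.induction with
  | empty => simp [nimSum] at h
  | cons a s ih =>
    rw [nimSum_cons, Nat.testBit_xor] at h
    by_cases ha : a.testBit i = true
    · exact ⟨a, Multiset.mem_cons_self a s, ha⟩
    · simp only [Bool.not_eq_true] at ha
      rw [ha, Bool.false_xor] at h
      obtain ⟨x, hx, hxb⟩ := ih h
      exact ⟨x, Multiset.mem_cons_of_mem hx, hxb⟩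

/-- Existence of the balancing move in ordinary Nim. -/
lemma exists_good_move {s : Multiset ℕ} (h : nimSum s ≠ 0) :
    ∃ x ∈ s, x ^^^ nimSum s < x := by
  obtain ⟨i, hi, hi'⟩ := Nat.exists_most_significant_bit h
  obtain ⟨x, hx, hxb⟩ := exists_testBit_mem hi
  refine ⟨x, hx, Nat.lt_of_testBit i ?_ hxb fun j hj => ?_⟩
  · rw [Nat.testBit_xor, hxb, hi]; rfl
  · rw [Nat.testBit_xor, hi' j hj, Bool.xor_false]

lemma nimSum_le_one {s : Multiset ℕ} (h : ∀ a ∈ s, a ≤ 1) : nimSum s ≤ 1 := by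
  induction s using Multiset.induction with
  | empty => simp [nimSum]
  | cons a s ih =>
    rw [nimSum_cons]
    have ha : a ≤ 1 := h a (Multiset.mem_cons_self a s)
    have hs : nimSum s ≤ 1 := ih fun x hx => h x (Multiset.mem_cons_of_mem hx)
    interval_cases a <;> interval_cases h' : nimSum s <;> simp

/-- If there are two piles of size at least 2, then after modifying any single
pile there is still a pile of size at least 2. -/
lemma two_big_erase {s : Multiset ℕ} {a c : ℕ} (ha : a ∈ s) (hc : c ∈ s.erase a)
    (h2a : 2 ≤ a) (h2c : 2 ≤ c) {x : ℕ} (hx : x ∈ s) : ∃ d ∈ s.erase x, 2 ≤ d := by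
  have h1 : 0 < Multiset.countP (2 ≤ ·) (s.erase a) := Multiset.countP_pos_of_mem hc h2c
  have h2 : 2 ≤ Multiset.countP (2 ≤ ·) s := by
    conv_rhs => rw [← Multiset.cons_erase ha]
    rw [Multiset.countP_cons_of_pos _ h2a]
    show 2 ≤ Multiset.countP (2 ≤ ·) (s.erase a) + 1
    omega
  have h3 : Multiset.countP (2 ≤ ·) s ≤ Multiset.countP (2 ≤ ·) (s.erase x) + 1 := by
    conv_lhs => rw [← Multiset.cons_erase hx]
    rw [Multiset.countP_cons]
    show Multiset.countP (2 ≤ ·) (s.erase x) + (if 2 ≤ x then 1 else 0) ≤ _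
    split <;> omega
  have h4 : 0 < Multiset.countP (2 ≤ ·) (s.erase x) := by omega
  exact Multiset.countP_pos.mp h4

/-- If the nim-sum is zero and some pile has size at least 2, there is a second
pile of size at least 2. -/
lemma second_big {s : Multiset ℕ} {a : ℕ} (ha : a ∈ s) (h2 : 2 ≤ a)
    (hz : nimSum s = 0) : ∃ c ∈ s.erase a, 2 ≤ c := by
  by_contra hcon
  push_neg at hcon
  have hle : nimSum (s.erase a) ≤ 1 := nimSum_le_one fun x hx => by
    have := hcon x hx; omega
  have := nimSum_erase ha
  rw [hz] at this
  have : a = nimSum (s.erase a) := by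
    have := xor_eq_zero_iff.mp this.symm
    exact this
  omega

lemma move_sum_lt {s t : Multiset ℕ} (h : NimMove s t) : t.sum < s.sum := by
  obtain ⟨a, ha, b, hb, rfl⟩ := h
  have hs : s.sum = a + (s.erase a).sum := by
    conv_lhs => rw [← Multiset.cons_erase ha, Multiset.sum_cons]
  rw [Multiset.sum_cons]
  omega

lemma exists_move_of_Pp {s : Multiset ℕ} (hp : Pp s) : ∃ t, NimMove s t := by
  rcases hp with ⟨-, hodd⟩ | ⟨⟨a, ha, h2⟩, -⟩
  · have h1 : (1 : ℕ) ∈ s := Multiset.count_pos.mp (by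
      rcases hodd with ⟨k, hk⟩; omega)
    exact ⟨0 ::ₘ s.erase 1, 1, h1, 0, one_pos, rfl⟩
  · exact ⟨0 ::ₘ s.erase a, a, ha, 0, by omega, rfl⟩

lemma count_one_cons_zero (u : Multiset ℕ) :
    Multiset.count 1 (0 ::ₘ u) = Multiset.count 1 u := by
  rw [Multiset.count_cons]; simp

/-- The strategy lemma: from a P-position every move leads to a non-P-position. -/
lemma not_Pp_of_move {s t : Multiset ℕ} (hp : Pp s) (hm : NimMove s t) : ¬ Pp t := by
  obtain ⟨a, ha, b, hab, rfl⟩ := hm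
  rcases hp with ⟨hall, hodd⟩ | ⟨⟨a0, ha0, h2a0⟩, hz⟩
  · -- all piles ≤ 1, odd number of 1-piles
    have ha1 : a = 1 := by have := hall a ha; omega
    have hb0 : b = 0 := by omega
    subst ha1; subst hb0
    rintro (⟨-, hodd'⟩ | ⟨⟨c, hc, h2c⟩, -⟩)
    · rw [count_one_cons_zero, Multiset.count_erase_self] at hodd'
      have hpos : 0 < s.count 1 := Multiset.count_pos.mpr ha
      rw [Nat.odd_iff] at hodd hodd'
      omega
    · rcases Multiset.mem_cons.mp hc with rfl | hc'
      · omega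
      · have := hall c (Multiset.mem_of_mem_erase hc')
        omega
  · -- nim-sum zero with a big pile
    have hne : nimSum (b ::ₘ s.erase a) ≠ 0 := by
      have hnea : nimSum (s.erase a) = a := by
        have h := nimSum_erase ha
        rw [hz] at h
        exact (xor_eq_zero_iff.mp h.symm).symm
      intro h
      rw [nimSum_cons, hnea] at h
      have := xor_eq_zero_iff.mp h
      omega
    obtain ⟨c0, hc0, h2c0⟩ := second_big ha0 h2a0 hz
    obtain ⟨d, hd, h2d⟩ := two_big_erase ha0 hc0 h2a0 h2c0 ha
    rintro (⟨hall', -⟩ | ⟨-, hz'⟩)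
    · have := hall' d (Multiset.mem_cons_of_mem hd)
      omega
    · exact hne hz'

/-- The strategy lemma: from a non-P-position with moves available, some move
leads to a P-position. -/
lemma good_move_of_not_Pp {s : Multiset ℕ} (hnp : ¬ Pp s) (hex : ∃ t, NimMove s t) :
    ∃ t, NimMove s t ∧ Pp t := by
  classical
  rw [Pp, not_or, not_and_or, not_and_or] at hnp
  obtain ⟨hA, hB⟩ := hnp
  by_cases hbig : ∃ a ∈ s, 2 ≤ a
  · obtain ⟨a, ha, h2a⟩ := hbig
    have hnz : nimSum s ≠ 0 := by
      rcases hB with h | h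
      · exact absurd ⟨a, ha, h2a⟩ h
      · exact h
    by_cases hone : ∃ c ∈ s.erase a, 2 ≤ c
    · -- at least two big piles: play the ordinary Nim balancing move
      obtain ⟨c, hc, h2c⟩ := hone
      obtain ⟨x, hx, hlt⟩ := exists_good_move hnz
      refine ⟨(x ^^^ nimSum s) ::ₘ s.erase x, ⟨x, hx, _, hlt, rfl⟩, Or.inr ?_⟩
      obtain ⟨d, hd, h2d⟩ := two_big_erase ha hc h2a h2c hx
      refine ⟨⟨d, Multiset.mem_cons_of_mem hd, h2d⟩, ?_⟩
      have he : nimSum (s.erase x) = x ^^^ nimSum s := by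
        have := nimSum_erase hx
        rw [this, ← Nat.xor_assoc, Nat.xor_self, Nat.zero_xor]
      rw [nimSum_cons, he, Nat.xor_self]
    · -- exactly one big pile `a`: move it to 0 or 1 to fix parity
      push_neg at hone
      have hsmall : ∀ c ∈ s.erase a, c ≤ 1 := fun c hc => by have := hone c hc; omega
      have hane : a ≠ 1 := by omega
      have hcount : s.count 1 = (s.erase a).count 1 := by
        rw [← Multiset.count_erase_of_ne (by omega : (1:ℕ) ≠ a)]
      by_cases hk : Odd ((s.erase a).count 1)
      · refine ⟨0 ::ₘ s.erase a, ⟨a, ha, 0, by omega, rfl⟩, Or.inl ⟨?_, ?_⟩⟩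
        · rintro y hy
          rcases Multiset.mem_cons.mp hy with rfl | hy'
          · omega
          · exact hsmall y hy'
        · rwa [count_one_cons_zero]
      · refine ⟨1 ::ₘ s.erase a, ⟨a, ha, 1, by omega, rfl⟩, Or.inl ⟨?_, ?_⟩⟩
        · rintro y hy
          rcases Multiset.mem_cons.mp hy with rfl | hy'
          · omega
          · exact hsmall y hy'
        · rw [Multiset.count_cons_self]
          rw [Nat.odd_iff] at *
          omega
  · -- all piles small: parity must be even; take a 1-pile to 0
    push_neg at hbig
    have hall : ∀ a ∈ s, a ≤ 1 := fun a ha => by have := hbig a ha; omega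
    have heven : ¬ Odd (s.count 1) := by
      rcases hA with h | h
      · exact absurd hall h
      · exact h
    obtain ⟨t0, a, ha, b, hb, -⟩ := hex
    have ha1 : a = 1 := by have := hall a ha; omega
    subst ha1
    refine ⟨0 ::ₘ s.erase 1, ⟨1, ha, 0, one_pos, rfl⟩, Or.inl ⟨?_, ?_⟩⟩
    · rintro y hy
      rcases Multiset.mem_cons.mp hy with rfl | hy'
      · omega
      · exact hall y (Multiset.mem_of_mem_erase hy')
    · rw [count_one_cons_zero, Multiset.count_erase_self]
      have hpos : 0 < s.count 1 := Multiset.count_pos.mpr ha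
      rw [Nat.odd_iff] at *
      omega

lemma main_lemma : ∀ n : ℕ, ∀ s : Multiset ℕ, s.sum < n →
    (MiserePPos s ↔ Pp s) ∧ (MisereNPos s ↔ ¬ Pp s) := by
  intro n
  induction n with
  | zero => intro s h; omega
  | succ n ih =>
    intro s hs
    have ihP : ∀ t, NimMove s t → (MiserePPos t ↔ Pp t) := fun t ht =>
      (ih t (lt_of_lt_of_le (move_sum_lt ht) (Nat.lt_succ_iff.mp hs))).1
    have ihN : ∀ t, NimMove s t → (MisereNPos t ↔ ¬ Pp t) := fun t ht =>
      (ih t (lt_of_lt_of_le (move_sum_lt ht) (Nat.lt_succ_iff.mp hs))).2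
    constructor
    · constructor
      · intro h
        cases h with
        | mk s hex hall =>
          by_contra hnp
          obtain ⟨t, ht, hpt⟩ := good_move_of_not_Pp hnp hex
          exact (ihN t ht).mp (hall t ht) hpt
      · intro hp
        exact MiserePPos.mk s (exists_move_of_Pp hp)
          (fun t ht => (ihN t ht).mpr (not_Pp_of_move hp ht))
    · constructor
      · intro h hp
        cases h with
        | stuck s hstuck =>
          obtain ⟨t, ht⟩ := exists_move_of_Pp hp
          exact hstuck t ht
        | mk s t ht hpt =>
          exact not_Pp_of_move hp ht ((ihP t ht).mp hpt)
      · intro hnp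
        by_cases hex : ∃ t, NimMove s t
        · obtain ⟨t, ht, hpt⟩ := good_move_of_not_Pp hnp hex
          exact MisereNPos.mk s t ht ((ihP t ht).mpr hpt)
        · exact MisereNPos.stuck s (fun t ht => hex ⟨t, ht⟩)

/-- Solution of misère Nim: a position is a previous-player win iff either all
piles have size at most 1 and the number of size-1 piles is odd, or some pile
has size at least 2 and the nim-sum of the pile sizes is zero. -/
theorem stmt4 (s : Multiset ℕ) :
    MiserePPos s ↔
      ((∀ a ∈ s, a ≤ 1) ∧ Odd (s.count 1)) ∨
      ((∃ a ∈ s, 2 ≤ a) ∧ nimSum s = 0) := by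
  exact (main_lemma (s.sum + 1) s (Nat.lt_succ_self _)).1
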